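/- For every integer k ≥ 1 and every real δ > 0, one has Φ((1+δ)/k, k) ≥ kδ/(1+δ). -/
import Mathlib


/-!
Arithmetic facts about Φ(ε,k) = 1 + ∑_{i=1}^{k-1} 1 / max{ε⁻¹ - i, 1}
and the harmonic numbers H(m) = ∑_{i=1}^m 1/i.
-/

namespace Paging

/-- `Φ(ε,k) = 1 + ∑_{i=1}^{k-1} 1 / max{ε⁻¹ - i, 1}`. -/
noncomputable def Phi (ε : ℝ) (k : ℕ) : ℝ :=
  1 + ∑ i ∈ Finset.Ico 1 k, 1 / max (ε⁻¹ - (i : ℝ)) 1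

/-- The harmonic number `H(m) = ∑_{i=1}^m 1/i` (with `H(0) = 0`). -/
noncomputable def Hharm (m : ℕ) : ℝ :=
  ∑ i ∈ Finset.Icc 1 m, 1 / (i : ℝ)

/-- for `k ≥ 1` and `δ > 0`, `Φ((1+δ)/k, k) ≥ kδ/(1+δ)`. -/
theorem phi_above_threshold (k : ℕ) (hk : 1 ≤ k) (δ : ℝ) (hδ : 0 < δ) :
    (k : ℝ) * δ / (1 + δ) ≤ Phi ((1 + δ) / (k : ℝ)) k := by
  have hk0 : (0:ℝ) < k := by exact_mod_cast hk
  have hδ1 : (0:ℝ) < 1 + δ := by linarith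
  set t : ℝ := (k : ℝ) / (1 + δ) with ht
  have ht0 : 0 < t := by positivity
  have htk : t ≤ (k : ℝ) := by
    rw [ht, div_le_iff₀ hδ1]; nlinarith
  have hinv : ((1 + δ) / (k : ℝ))⁻¹ = t := by
    rw [ht]; field_simp
  set m : ℕ := max ⌈t⌉₊ 1 with hm
  have hmk : m ≤ k := by
    apply max_le _ hk
    exact Nat.ceil_le.mpr (by exact_mod_cast htk)
  have h1m : 1 ≤ m := le_max_right _ _
  have hterm : ∀ i ∈ Finset.Ico m k, (1:ℝ) / max (t - (i:ℝ)) 1 = 1 := by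
    intro i hi
    have h1 : (⌈t⌉₊ : ℝ) ≤ (i : ℝ) := by
      exact_mod_cast le_trans (le_max_left _ _) (Finset.mem_Ico.mp hi).1
    have h2 : t ≤ (i : ℝ) := le_trans (Nat.le_ceil t) h1
    rw [max_eq_right (by linarith)]
    norm_num
  have hsum : ((k : ℝ) - m) ≤ ∑ i ∈ Finset.Ico 1 k, 1 / max (t - (i:ℝ)) 1 := by
    have h1 : ∑ i ∈ Finset.Ico m k, (1:ℝ) / max (t - (i:ℝ)) 1 = (k : ℝ) - m := by
      rw [Finset.sum_congr rfl hterm, Finset.sum_const, Nat.card_Ico,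
        nsmul_eq_mul, mul_one, Nat.cast_sub hmk]
    rw [← h1]
    apply Finset.sum_le_sum_of_subset_of_nonneg
      (Finset.Ico_subset_Ico h1m le_rfl)
    intro i _ _
    have : (1:ℝ) ≤ max (t - (i:ℝ)) 1 := le_max_right _ _
    positivity
  have hmt : (m : ℝ) ≤ t + 1 := by
    have hceil : (⌈t⌉₊ : ℝ) ≤ t + 1 := le_of_lt (Nat.ceil_lt_add_one ht0.le)
    have : (m : ℝ) = max (⌈t⌉₊ : ℝ) 1 := by
      rw [hm]; exact_mod_cast Nat.cast_max ..
    rw [this]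
    exact max_le hceil (by linarith)
  have hgoal : (k : ℝ) * δ / (1 + δ) = (k : ℝ) - t := by
    rw [ht]; field_simp; ring
  rw [hgoal, Phi, hinv]
  linarith

end Paging
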